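/- Let G and H be non-empty locally finite graphs. If the neighborhood complexes N(G) and N(H) are isomorphic as abstract simplicial complexes, then there is a ×-homotopy equivalence K_2 × G → K_2 × H. -/

import Mathlib

/-- A graph: a vertex type with a symmetric edge relation (loops allowed). -/
structure XGraph where
  V : Type
  E : V → V → Prop
  symm : ∀ ⦃x y⦄, E x y → E y x

/-- XGraph homomorphisms. -/
def XGraph.Hom (G H : XGraph) : Type :=
  {f : G.V → H.V // ∀ ⦃x y⦄, G.E x y → H.E (f x) (f y)}

/-- XGraph isomorphisms: bijective homomorphisms whose inverse is a homomorphism. -/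
structure XGraph.Iso (G H : XGraph) extends G.V ≃ H.V where
  edge_iff : ∀ x y, G.E x y ↔ H.E (toEquiv x) (toEquiv y)

/-- The complete graph `K₂` on two vertices. -/
def K2 : XGraph := ⟨Fin 2, fun x y => x ≠ y, fun _ _ h => h.symm⟩

/-- The tensor (categorical) product of graphs. -/
def XGraph.tensor (G H : XGraph) : XGraph :=
  ⟨G.V × H.V, fun p q => G.E p.1 q.1 ∧ H.E p.2 q.2,
   fun _ _ h => ⟨G.symm h.1, H.symm h.2⟩⟩

/-- No isolated vertices. -/
def XGraph.NoIsolated (G : XGraph) : Prop := ∀ x, ∃ y, G.E x y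

/-- An abstract simplicial complex, given by its vertex type and its simplices
(nonempty finite vertex sets). -/
structure SComplex where
  V : Type
  S : Finset V → Prop

/-- Isomorphism of abstract simplicial complexes: a bijection of vertex sets under
which a finite set is a simplex iff its image is a simplex. -/
def SComplex.Iso (A B : SComplex) : Prop :=
  ∃ e : A.V ≃ B.V, ∀ s : Finset A.V, A.S s ↔ B.S (s.map e.toEmbedding)

/-- The neighborhood complex `N(G)`: vertices are the non-isolated vertices of `G`,
simplices the nonempty finite sets contained in the neighborhood of some vertex. -/
def XGraph.NC (G : XGraph) : SComplex where
  V := {x : G.V // ∃ y, G.E x y}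
  S s := s.Nonempty ∧ ∃ v : G.V, ∀ x ∈ s, G.E v x.val

/-- The graph `Iₙ`: vertices `{0, …, n}`, with `x ~ y` iff `|x - y| ≤ 1` (loops at
every vertex). -/
def Igraph (n : ℕ) : XGraph :=
  ⟨Fin (n + 1), fun x y => (x : ℕ) ≤ (y : ℕ) + 1 ∧ (y : ℕ) ≤ (x : ℕ) + 1,
   fun _ _ h => ⟨h.2, h.1⟩⟩

/-- `f` and `g` are ×-homotopic: there are `n` and a homomorphism `K : G × Iₙ → H`
with `K(x,0) = f(x)` and `K(x,n) = g(x)`. -/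
def XHomotopic {G H : XGraph} (f g : G.Hom H) : Prop :=
  ∃ n : ℕ, ∃ K : (G.tensor (Igraph n)).Hom H,
    ∀ x : G.V, K.1 ((x, 0) : G.V × Fin (n + 1)) = f.1 x ∧
      K.1 ((x, Fin.last n) : G.V × Fin (n + 1)) = g.1 x

/-- The identity homomorphism. -/
def XGraph.Hom.id (G : XGraph) : G.Hom G := ⟨fun x => x, fun _ _ h => h⟩

/-- Composition of graph homomorphisms. -/
def XGraph.Hom.comp {F G H : XGraph} (g : G.Hom H) (f : F.Hom G) : F.Hom H :=
  ⟨g.1 ∘ f.1, fun _ _ h => g.2 (f.2 h)⟩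

/-- `f : G → H` is a ×-homotopy equivalence if it has a ×-homotopy inverse. -/
def IsXHtpyEquiv {G H : XGraph} (f : G.Hom H) : Prop :=
  ∃ h : H.Hom G, XHomotopic (h.comp f) (XGraph.Hom.id G) ∧
    XHomotopic (f.comp h) (XGraph.Hom.id H)

/-- Key construction: for each non-isolated vertex `x` of `G`, its neighborhood is a
simplex of `N(G)`, hence its image under `e` is a simplex of `N(H)`, i.e. is contained in
the neighborhood of some vertex `w` of `H`. -/
lemma graph_key (G H : XGraph) (hGlf : ∀ x : G.V, {y | G.E x y}.Finite)
    (e : G.NC.V ≃ H.NC.V)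
    (he : ∀ s : Finset G.NC.V, G.NC.S s → H.NC.S (s.map e.toEmbedding)) :
    ∀ x : G.NC.V, ∃ w : H.V, ∀ (y : G.V) (hy : G.E x.val y),
      H.E w (e ⟨y, ⟨x.val, G.symm hy⟩⟩).val := by
  classical
  rintro ⟨x, hx⟩
  have hfin : {z : G.NC.V | G.E x z.val}.Finite := by
    have hE : {z : G.NC.V | G.E x z.val} = Subtype.val ⁻¹' {y | G.E x y} := rfl
    rw [hE]
    exact Set.Finite.preimage (Set.injOn_of_injective Subtype.val_injective) (hGlf x)
  set s : Finset G.NC.V := hfin.toFinset with hs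
  have hmem : ∀ z : G.NC.V, z ∈ s ↔ G.E x z.val := fun z => hfin.mem_toFinset
  have hSs : G.NC.S s := by
    obtain ⟨y, hy⟩ := hx
    refine ⟨⟨⟨y, ⟨x, G.symm hy⟩⟩, (hmem _).mpr hy⟩, x, ?_⟩
    intro z hz; exact (hmem z).mp hz
  obtain ⟨-, w, hw⟩ := he s hSs
  refine ⟨w, fun y hy => ?_⟩
  exact hw _ (Finset.mem_map_of_mem _ ((hmem ⟨y, ⟨x, G.symm hy⟩⟩).mpr hy))

/-- A "one-step" homotopy criterion: if whenever `x ~ y` we have `f x ~ g y`,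
then `f` and `g` are ×-homotopic. -/
lemma xhomotopic_step {G H : XGraph} (f g : G.Hom H)
    (hfg : ∀ x y, G.E x y → H.E (f.1 x) (g.1 y)) : XHomotopic f g := by
  refine ⟨1, ⟨fun p : G.V × Fin 2 => if p.2 = 0 then f.1 p.1 else g.1 p.1, ?_⟩, ?_⟩
  · rintro ⟨x, t⟩ ⟨y, u⟩ ⟨hxy, -⟩
    dsimp only
    split_ifs
    · exact f.2 hxy
    · exact hfg x y hxy
    · exact H.symm (hfg y x (G.symm hxy))
    · exact g.2 hxy
  · intro x
    constructor
    · show (if (0 : Fin 2) = 0 then f.1 x else g.1 x) = f.1 x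
      simp
    · show (if (Fin.last 1 : Fin 2) = 0 then f.1 x else g.1 x) = g.1 x
      have hlast : (Fin.last 1 : Fin 2) ≠ 0 := by decide
      simp [hlast]

/-- if `G`, `H` are non-empty locally finite graphs with `N(G) ≅ N(H)`,
then there is a ×-homotopy equivalence `K₂ × G → K₂ × H`. -/
theorem xhtpy_equiv_of_NC_iso (G H : XGraph)
    (hGne : Nonempty G.V) (hHne : Nonempty H.V)
    (hGlf : ∀ x : G.V, {y | G.E x y}.Finite) (hHlf : ∀ x : H.V, {y | H.E x y}.Finite)
    (h : G.NC.Iso H.NC) :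
    ∃ F : (K2.tensor G).Hom (K2.tensor H), IsXHtpyEquiv F := by
  classical
  obtain ⟨e, he⟩ := h
  have he1 : ∀ s, G.NC.S s → H.NC.S (s.map e.toEmbedding) := fun s => (he s).mp
  have hmapinv : ∀ s : Finset H.NC.V,
      (s.map e.symm.toEmbedding).map e.toEmbedding = s := by
    intro s; ext z; simp
  have he2 : ∀ s, H.NC.S s → G.NC.S (s.map e.symm.toEmbedding) := by
    intro s hs
    exact (he _).mpr (by rwa [hmapinv])
  choose α hα using graph_key G H hGlf e he1
  choose β hβ using graph_key H G hHlf e.symm he2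
  obtain ⟨g0⟩ := hGne; obtain ⟨h0⟩ := hHne
  set φ : G.V → H.V := fun x => if hx : ∃ y, G.E x y then (e ⟨x, hx⟩).val else h0
  set φ' : H.V → G.V := fun y => if hy : ∃ z, H.E y z then (e.symm ⟨y, hy⟩).val else g0
  set A : G.V → H.V := fun x => if hx : ∃ y, G.E x y then α ⟨x, hx⟩ else h0
  set B : H.V → G.V := fun y => if hy : ∃ z, H.E y z then β ⟨y, hy⟩ else g0
  have hφeq : ∀ (x : G.V) (hx : ∃ y, G.E x y), φ x = (e ⟨x, hx⟩).val :=
    fun x hx => dif_pos hx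
  have hφ'eq : ∀ (y : H.V) (hy : ∃ z, H.E y z), φ' y = (e.symm ⟨y, hy⟩).val :=
    fun y hy => dif_pos hy
  have hAeq : ∀ (x : G.V) (hx : ∃ y, G.E x y), A x = α ⟨x, hx⟩ :=
    fun x hx => dif_pos hx
  have hBeq : ∀ (y : H.V) (hy : ∃ z, H.E y z), B y = β ⟨y, hy⟩ :=
    fun y hy => dif_pos hy
  -- basic edge properties
  have h1 : ∀ x y, G.E x y → H.E (φ x) (A y) := by
    intro x y hxy
    have hx : ∃ z, G.E x z := ⟨y, hxy⟩
    have hy : ∃ z, G.E y z := ⟨x, G.symm hxy⟩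
    rw [hφeq x hx, hAeq y hy]
    exact H.symm (hα ⟨y, hy⟩ x (G.symm hxy))
  have h2 : ∀ x y, H.E x y → G.E (φ' x) (B y) := by
    intro x y hxy
    have hx : ∃ z, H.E x z := ⟨y, hxy⟩
    have hy : ∃ z, H.E y z := ⟨x, H.symm hxy⟩
    rw [hφ'eq x hx, hBeq y hy]
    exact G.symm (hβ ⟨y, hy⟩ x (H.symm hxy))
  -- the round trips on the `e` side
  have h3 : ∀ (x : G.V), (∃ y, G.E x y) → φ' (φ x) = x := by
    intro x hx
    rw [hφeq x hx]
    have hni : ∃ z, H.E (e ⟨x, hx⟩).val z := (e ⟨x, hx⟩).property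
    rw [hφ'eq _ hni]
    exact congrArg Subtype.val (e.symm_apply_apply ⟨x, hx⟩)
  have h4 : ∀ (y : H.V), (∃ z, H.E y z) → φ (φ' y) = y := by
    intro y hy
    rw [hφ'eq y hy]
    have hni : ∃ z, G.E (e.symm ⟨y, hy⟩).val z := (e.symm ⟨y, hy⟩).property
    rw [hφeq _ hni]
    exact congrArg Subtype.val (e.apply_symm_apply ⟨y, hy⟩)
  -- the round trips on the `α, β` side
  have h5 : ∀ x y, G.E x y → G.E x (B (A y)) := by
    intro x y hxy
    have hx : ∃ z, G.E x z := ⟨y, hxy⟩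
    have hAy : H.E (φ x) (A y) := h1 x y hxy
    have hni : ∃ z, H.E (A y) z := ⟨φ x, H.symm hAy⟩
    have hstep := hβ ⟨A y, hni⟩ (φ x) (H.symm hAy)
    have hval : ∀ p, ((e.symm ⟨φ x, p⟩ : G.NC.V)).val = x := by
      intro p
      have hq : (⟨φ x, p⟩ : H.NC.V) = e ⟨x, hx⟩ := Subtype.ext (hφeq x hx)
      rw [hq]; exact congrArg Subtype.val (e.symm_apply_apply ⟨x, hx⟩)
    rw [hval] at hstep
    rw [hBeq (A y) hni]
    exact G.symm hstep
  have h6 : ∀ x y, H.E x y → H.E x (A (B y)) := by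
    intro x y hxy
    have hx : ∃ z, H.E x z := ⟨y, hxy⟩
    have hBy : G.E (φ' x) (B y) := h2 x y hxy
    have hni : ∃ z, G.E (B y) z := ⟨φ' x, G.symm hBy⟩
    have hstep := hα ⟨B y, hni⟩ (φ' x) (G.symm hBy)
    have hval : ∀ p, ((e ⟨φ' x, p⟩ : H.NC.V)).val = x := by
      intro p
      have hq : (⟨φ' x, p⟩ : G.NC.V) = e.symm ⟨x, hx⟩ := Subtype.ext (hφ'eq x hx)
      rw [hq]; exact congrArg Subtype.val (e.apply_symm_apply ⟨x, hx⟩)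
    rw [hval] at hstep
    rw [hAeq (B y) hni]
    exact H.symm hstep
  have fin2 : ∀ v : Fin 2, v = 0 ∨ v = 1 := by decide
  -- the homomorphisms
  refine ⟨⟨fun p : Fin 2 × G.V => (p.1, if p.1 = 0 then φ p.2 else A p.2), ?_⟩,
    ⟨fun p : Fin 2 × H.V => (p.1, if p.1 = 0 then φ' p.2 else B p.2), ?_⟩, ?_, ?_⟩
  · rintro ⟨i, x⟩ ⟨j, y⟩ ⟨hij, hxy⟩
    refine ⟨hij, ?_⟩
    dsimp only
    rcases fin2 i with rfl | rfl <;> rcases fin2 j with rfl | rfl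
    · exact absurd rfl hij
    · simpa using h1 x y hxy
    · simpa using H.symm (h1 y x (G.symm hxy))
    · exact absurd rfl hij
  · rintro ⟨i, x⟩ ⟨j, y⟩ ⟨hij, hxy⟩
    refine ⟨hij, ?_⟩
    dsimp only
    rcases fin2 i with rfl | rfl <;> rcases fin2 j with rfl | rfl
    · exact absurd rfl hij
    · simpa using h2 x y hxy
    · simpa using G.symm (h2 y x (H.symm hxy))
    · exact absurd rfl hij
  · apply xhomotopic_step
    rintro ⟨i, x⟩ ⟨j, y⟩ ⟨hij, hxy⟩
    dsimp only [XGraph.Hom.comp, XGraph.Hom.id, Function.comp]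
    refine ⟨hij, ?_⟩
    rcases fin2 i with rfl | rfl <;> rcases fin2 j with rfl | rfl
    · exact absurd rfl hij
    · simpa [h3 x ⟨y, hxy⟩] using hxy
    · simpa using G.symm (h5 y x (G.symm hxy))
    · exact absurd rfl hij
  · apply xhomotopic_step
    rintro ⟨i, x⟩ ⟨j, y⟩ ⟨hij, hxy⟩
    dsimp only [XGraph.Hom.comp, XGraph.Hom.id, Function.comp]
    refine ⟨hij, ?_⟩
    rcases fin2 i with rfl | rfl <;> rcases fin2 j with rfl | rfl
    · exact absurd rfl hij
    · simpa [h4 x ⟨y, hxy⟩] using hxy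
    · simpa using H.symm (h6 y x (H.symm hxy))
    · exact absurd rfl hij
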